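/- arXiv:2403.07178 — 5 statements merged into one kernel-verified Lean document; each statement's English description precedes it below -/
import Mathlib

section
/- Let (X, 𝒜, μ) be a measure space, let (ε_n) be a sequence of positive real numbers with ε_n → 0, and let (u_n) be a sequence of measurable functions u_n : X → ℝ converging μ-almost everywhere to a function u : X → ℝ. If liminf_{n→∞} (1/ε_n) ∫_X W(u_n(x)) dμ(x) < ∞, then W(u(x)) = 0 for μ-almost every x; equivalently, u(x) ∈ {−1, 1} for μ-almost every x ∈ X. -/
open MeasureTheory Filter Topology ENNReal

/-- If a sequence of Cahn–Hilliard potential energies `(1/εₙ) ∫ W(uₙ) dμ` has finite liminf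
with `εₙ → 0`, and `uₙ → u` μ-a.e., then `W(u) = 0` a.e., i.e. `u ∈ {-1, 1}` a.e. -/
theorem stmt0 {X : Type*} [MeasurableSpace X] (μ : Measure X)
    (W : ℝ → ℝ) (hWcont : Continuous W) (hWnonneg : ∀ x, 0 ≤ W x)
    (hWzero : ∀ x, W x = 0 ↔ x = -1 ∨ x = 1)
    (ε : ℕ → ℝ) (hεpos : ∀ n, 0 < ε n) (hε0 : Tendsto ε atTop (𝓝 0))
    (u : ℕ → X → ℝ) (hu : ∀ n, Measurable (u n))
    (ulim : X → ℝ)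
    (hconv : ∀ᵐ x ∂μ, Tendsto (fun n => u n x) atTop (𝓝 (ulim x)))
    (hliminf : Filter.liminf
      (fun n => ENNReal.ofReal (1 / ε n) * ∫⁻ x, ENNReal.ofReal (W (u n x)) ∂μ)
      atTop < ⊤) :
    ∀ᵐ x ∂μ, W (ulim x) = 0 ∧ (ulim x = -1 ∨ ulim x = 1) := by
  set b : ℕ → ℝ≥0∞ := fun n => ∫⁻ x, ENNReal.ofReal (W (u n x)) ∂μ with hb
  -- 1 / ε n → ∞ in ℝ≥0∞
  have ha : Tendsto (fun n => ENNReal.ofReal (1 / ε n)) atTop (𝓝 ⊤) := by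
    have h1 : Tendsto (fun n => (ε n)⁻¹) atTop atTop := by
      apply Filter.Tendsto.inv_tendsto_nhdsGT_zero
      exact tendsto_nhdsWithin_of_tendsto_nhds_of_eventually_within _ hε0
        (Eventually.of_forall fun n => hεpos n)
    have h2 : Tendsto (fun n => ENNReal.ofReal ((ε n)⁻¹)) atTop (𝓝 ⊤) :=
      ENNReal.tendsto_ofReal_atTop.comp h1
    simpa [one_div] using h2
  -- liminf of the potential integrals is 0
  have hbl : liminf b atTop = 0 := by
    by_contra h
    have hpos : 0 < liminf b atTop := pos_iff_ne_zero.mpr h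
    obtain ⟨c, hc0, hc⟩ := exists_between hpos
    have hcne : c ≠ ⊤ := (hc.trans_le le_top).ne
    have hev : ∀ᶠ n in atTop, c < b n := eventually_lt_of_lt_liminf hc
    have htop : Tendsto (fun n => ENNReal.ofReal (1 / ε n) * b n) atTop (𝓝 ⊤) := by
      have hmc : Tendsto (fun n => ENNReal.ofReal (1 / ε n) * c) atTop (𝓝 ⊤) := by
        have := ENNReal.Tendsto.mul_const (b := c) ha (Or.inr hcne)
        simpa [ENNReal.top_mul hc0.ne'] using this
      refine tendsto_nhds_top_mono hmc ?_
      filter_upwards [hev] with n hn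
      exact mul_le_mul_right hn.le _
    have := htop.liminf_eq
    rw [this] at hliminf
    exact lt_irrefl _ hliminf
  -- Fatou
  have hmeas : ∀ n, Measurable fun x => ENNReal.ofReal (W (u n x)) :=
    fun n => ENNReal.measurable_ofReal.comp ((hWcont.measurable).comp (hu n))
  have hfatou : ∫⁻ x, liminf (fun n => ENNReal.ofReal (W (u n x))) atTop ∂μ = 0 := by
    have := lintegral_liminf_le hmeas (μ := μ) (u := atTop)
    rw [hbl] at this
    exact le_antisymm this zero_le
  have hzero : ∀ᵐ x ∂μ, liminf (fun n => ENNReal.ofReal (W (u n x))) atTop = 0 := by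
    have hmeas' : Measurable fun x => liminf (fun n => ENNReal.ofReal (W (u n x))) atTop :=
      Measurable.liminf fun n => hmeas n
    exact (lintegral_eq_zero_iff hmeas').mp hfatou
  filter_upwards [hconv, hzero] with x hx hz
  have hW : Tendsto (fun n => ENNReal.ofReal (W (u n x))) atTop
      (𝓝 (ENNReal.ofReal (W (ulim x)))) :=
    (ENNReal.continuous_ofReal.tendsto _).comp ((hWcont.tendsto _).comp hx)
  have : ENNReal.ofReal (W (ulim x)) = 0 := by rw [← hW.liminf_eq]; exact hz
  have hWle : W (ulim x) ≤ 0 := by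
    by_contra hlt
    push_neg at hlt
    exact (ENNReal.ofReal_pos.mpr hlt).ne' this
  have hW0 : W (ulim x) = 0 := le_antisymm hWle (hWnonneg _)
  exact ⟨hW0, (hWzero _).mp hW0⟩
end

section
/- Let X be a nonempty metric space and suppose (F_k) Γ-converges to F, where F_k, F : X → [0,∞]. Assume the family (F_k) is equicoercive: there exists a compact set K ⊆ X such that inf_{v ∈ X} F_k(v) = inf_{v ∈ K} F_k(v) for every k. Then F attains its infimum, i.e. there exists u ∈ X with F(u) = inf_{v ∈ X} F(v), and the sequence (inf_{v ∈ X} F_k(v))_k converges in [0,∞] to inf_{v ∈ X} F(v). -/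
open Filter Topology

/-- `(Fₖ)` Γ-converges to `F` on a metric space `X` (functionals valued in `[0,∞]`):
(i) liminf inequality along every convergent sequence, and
(ii) existence of recovery sequences. -/
def GammaConvergesTo {X : Type*} [MetricSpace X]
    (F : ℕ → X → ENNReal) (Flim : X → ENNReal) : Prop :=
  (∀ u : X, ∀ uk : ℕ → X, Tendsto uk atTop (𝓝 u) →
      Flim u ≤ liminf (fun k => F k (uk k)) atTop) ∧
  (∀ u : X, ∃ uk : ℕ → X, Tendsto uk atTop (𝓝 u) ∧
      Tendsto (fun k => F k (uk k)) atTop (𝓝 (Flim u)))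

/-- liminf of a full sequence is at most the liminf along a subsequence. -/
lemma liminf_le_liminf_subseq {u : ℕ → ENNReal} {τ : ℕ → ℕ}
    (hτ : Tendsto τ atTop atTop) :
    liminf u atTop ≤ liminf (fun j => u (τ j)) atTop := by
  have h := liminf_le_liminf_of_le (f := atTop) (g := Filter.map τ atTop) hτ (u := u)
  exact h

/-- limsup along a subsequence is at most the limsup of the full sequence. -/
lemma limsup_subseq_le {u : ℕ → ENNReal} {τ : ℕ → ℕ}
    (hτ : Tendsto τ atTop atTop) :
    limsup (fun j => u (τ j)) atTop ≤ limsup u atTop := by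
  have h := limsup_le_limsup_of_le (f := Filter.map τ atTop) (g := atTop) hτ (u := u)
  exact h

/-- Under equicoercivity, the Γ-limit attains its infimum and the infima of the `Fₖ`
converge to the infimum of the Γ-limit. -/
theorem stmt4 {X : Type*} [MetricSpace X] [Nonempty X]
    (F : ℕ → X → ENNReal) (Flim : X → ENNReal)
    (hΓ : GammaConvergesTo F Flim)
    (hequi : ∃ K : Set X, IsCompact K ∧
      ∀ k : ℕ, (⨅ v : X, F k v) = ⨅ v ∈ K, F k v) :
    (∃ u : X, Flim u = ⨅ v : X, Flim v) ∧
      Tendsto (fun k => ⨅ v : X, F k v) atTop (𝓝 (⨅ v : X, Flim v)) := by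
  classical
  obtain ⟨hliminf, hrec⟩ := hΓ
  set m : ℕ → ENNReal := fun k => ⨅ v : X, F k v with hm
  set M : ENNReal := ⨅ v : X, Flim v with hMdef
  -- upper bound: limsup of the infima is at most M
  have hA : limsup m atTop ≤ M := by
    refine le_iInf fun u => ?_
    obtain ⟨uk, huk, hfk⟩ := hrec u
    calc limsup m atTop ≤ limsup (fun k => F k (uk k)) atTop :=
          limsup_le_limsup (Eventually.of_forall fun k => iInf_le _ _)
      _ = Flim u := hfk.limsup_eq
  obtain ⟨K, hKc, hKeq⟩ := hequi
  rcases K.eq_empty_or_nonempty with rfl | ⟨x0, hx0⟩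
  · -- degenerate case: all functionals are identically ⊤
    have hmtop : ∀ k, m k = ⊤ := by
      intro k
      refine iInf_eq_top.mpr fun v => ?_
      have h := hKeq k
      simp only [Set.mem_empty_iff_false, iInf_false, iInf_top] at h
      exact iInf_eq_top.mp h v
    have hFlimtop : ∀ u : X, Flim u = ⊤ := by
      intro u
      obtain ⟨uk, huk, hfk⟩ := hrec u
      have htop : ∀ k, F k (uk k) = ⊤ := by
        intro k
        have := iInf_eq_top.mp (hmtop k)
        exact this (uk k)
      have : Tendsto (fun _ : ℕ => (⊤ : ENNReal)) atTop (𝓝 (Flim u)) := by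
        simpa [htop] using hfk
      exact (tendsto_nhds_unique tendsto_const_nhds this).symm
    have hMtop : M = ⊤ := by
      rw [hMdef]; simp [hFlimtop]
    refine ⟨⟨Classical.arbitrary X, by rw [hFlimtop, hMtop]⟩, ?_⟩
    rw [hMtop]
    have hcongr : m = fun _ => (⊤ : ENNReal) := funext hmtop
    rw [hcongr]
    exact tendsto_const_nhds
  -- main case: K nonempty
  -- almost-minimizers inside K
  have hv : ∀ k : ℕ, ∃ w ∈ K, F k w ≤ m k + (↑(k + 1) : ENNReal)⁻¹ := by
    intro k
    by_cases htop : m k = ⊤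
    · exact ⟨x0, hx0, by simp [htop]⟩
    · have hpos : ((↑(k + 1) : ENNReal))⁻¹ ≠ 0 := by
        simp [ENNReal.inv_ne_zero]
      have hlt : m k < m k + (↑(k + 1) : ENNReal)⁻¹ :=
        ENNReal.lt_add_right htop hpos
      have hlt2 : (⨅ v ∈ K, F k v) < m k + (↑(k + 1) : ENNReal)⁻¹ :=
        lt_of_le_of_lt (le_of_eq (hKeq k).symm) hlt
      rw [iInf_lt_iff] at hlt2
      obtain ⟨w, hw⟩ := hlt2
      rw [iInf_lt_iff] at hw
      obtain ⟨hwK, hw⟩ := hw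
      exact ⟨w, hwK, hw.le⟩
  choose v hvK hvle using hv
  -- the key claim: any subsequential limit of the infima dominates Flim at some point
  have hC : ∀ σ : ℕ → ℕ, Tendsto σ atTop atTop → ∀ a : ENNReal,
      Tendsto (fun j => m (σ j)) atTop (𝓝 a) → ∃ u : X, Flim u ≤ a := by
    intro σ hσ a ha
    obtain ⟨u, huK, ρ, hρ, hvρ⟩ := hKc.tendsto_subseq (x := fun j => v (σ j))
      (fun j => hvK _)
    set τ : ℕ → ℕ := fun j => σ (ρ j) with hτdef
    have hτtop : Tendsto τ atTop atTop := hσ.comp hρ.tendsto_atTop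
    have hvτ : Tendsto (fun j => v (τ j)) atTop (𝓝 u) := hvρ
    -- mixed sequence
    set w : ℕ → X := fun n => if ∃ j, τ j = n then v n else u with hwdef
    have hwτ : ∀ j, w (τ j) = v (τ j) := fun j => if_pos ⟨j, rfl⟩
    have hwconv : Tendsto w atTop (𝓝 u) := by
      rw [Metric.tendsto_atTop]
      intro ε hε
      obtain ⟨J, hJ⟩ := Metric.tendsto_atTop.mp hvτ ε hε
      refine ⟨(Finset.range J).sup τ + 1, fun n hn => ?_⟩
      by_cases h : ∃ j, τ j = n
      · obtain ⟨j, rfl⟩ := h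
        have hj : J ≤ j := by
          by_contra hlt
          push_neg at hlt
          have hle : τ j ≤ (Finset.range J).sup τ :=
            Finset.le_sup (Finset.mem_range.mpr hlt)
          omega
        have := hJ j hj
        simpa [hwτ j] using this
      · simp only [hwdef, if_neg h]
        simpa using hε
    have h1 : Flim u ≤ liminf (fun k => F k (w k)) atTop := hliminf u w hwconv
    have h2 : liminf (fun k => F k (w k)) atTop ≤
        liminf (fun j => F (τ j) (w (τ j))) atTop :=
      liminf_le_liminf_subseq hτtop
    have h3 : liminf (fun j => F (τ j) (w (τ j))) atTop ≤
        liminf (fun j => m (τ j) + (↑(τ j + 1) : ENNReal)⁻¹) atTop := by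
      refine liminf_le_liminf (Eventually.of_forall fun j => ?_)
      rw [hwτ j]
      exact hvle (τ j)
    have hmτ : Tendsto (fun j => m (τ j)) atTop (𝓝 a) := ha.comp hρ.tendsto_atTop
    have hinv : Tendsto (fun j => (↑(τ j + 1) : ENNReal)⁻¹) atTop (𝓝 0) := by
      have h1' : Tendsto (fun j => τ j + 1) atTop atTop :=
        tendsto_atTop_mono (fun j => Nat.le_succ_of_le le_rfl) hτtop
      exact ENNReal.tendsto_inv_nat_nhds_zero.comp h1' 
    have hsum : Tendsto (fun j => m (τ j) + (↑(τ j + 1) : ENNReal)⁻¹) atTop (𝓝 a) := by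
      have := hmτ.add hinv
      simpa using this
    have h4 : liminf (fun j => m (τ j) + (↑(τ j + 1) : ENNReal)⁻¹) atTop = a :=
      hsum.liminf_eq
    exact ⟨u, h1.trans (h2.trans (h3.trans_eq h4))⟩
  -- existence of a minimizer
  obtain ⟨a, ρ₀, hρ₀, hmρ₀⟩ := CompactSpace.tendsto_subseq m
  have haM : a ≤ M := by
    have h5 := limsup_subseq_le (u := m) hρ₀.tendsto_atTop
    exact le_trans (le_trans (le_of_eq hmρ₀.limsup_eq.symm) h5) hA
  obtain ⟨u, hu⟩ := hC ρ₀ hρ₀.tendsto_atTop a hmρ₀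
  have huM : Flim u = M := le_antisymm (hu.trans haM) (iInf_le _ _)
  refine ⟨⟨u, huM⟩, ?_⟩
  -- convergence of the infima
  refine tendsto_of_subseq_tendsto fun ns hns => ?_
  obtain ⟨b, ms, hms, hmb⟩ := CompactSpace.tendsto_subseq (fun n => m (ns n))
  refine ⟨ms, ?_⟩
  have hσ : Tendsto (fun n => ns (ms n)) atTop atTop := hns.comp hms.tendsto_atTop
  have hbM : b ≤ M := by
    have h5 := limsup_subseq_le (u := m) hσ
    exact le_trans (le_trans (le_of_eq hmb.limsup_eq.symm) h5) hA
  obtain ⟨u', hu'⟩ := hC _ hσ b hmb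
  have hMb : M ≤ b := le_trans (iInf_le _ _) hu'
  have hbM' : b = M := le_antisymm hbM hMb
  rw [← hbM']
  exact hmb
end

section
/- Let h > 0 and a ≥ 1. Define v : ℝ → ℝ³ by v(θ) = (a·cos θ, sin θ, −h) and let c(θ) = v(θ)/‖v(θ)‖ be the corresponding curve on the unit sphere (the curve of directions of the elliptic cone with apex (0,0,h) over the base ellipse {(a·cos θ, sin θ, 0)}). Then the arc length of c over one full period is strictly less than 2π: ∫₀^{2π} ‖c'(θ)‖ dθ < 2π. -/
set_option maxHeartbeats 2000000

open Real

section Aux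

lemma stmt8_denom_pos' {p q : ℝ} (hp : 0 < p) (hq : 0 < q) (θ : ℝ) :
    0 < p * cos θ ^ 2 + q * sin θ ^ 2 := by
  rcases le_total p q with h1 | h1 <;>
    nlinarith [sin_sq_add_cos_sq θ, sq_nonneg (sin θ), sq_nonneg (cos θ)]

lemma stmt8_key_hasDerivAt {p q : ℝ} (hp : 0 < p) (hq : 0 < q) {d : ℝ} (hd : 0 < d)
    (hd2 : p * d ^ 2 = q) (θ : ℝ) :
    HasDerivAt (fun θ : ℝ =>
      (θ + arctan ((d - 1) * sin θ * cos θ / (cos θ ^ 2 + d * sin θ ^ 2))) / (p * d))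
      ((p * cos θ ^ 2 + q * sin θ ^ 2)⁻¹) θ := by
  have hsc : sin θ ^ 2 + cos θ ^ 2 = 1 := sin_sq_add_cos_sq θ
  have hden : 0 < cos θ ^ 2 + d * sin θ ^ 2 := by
    rcases le_total d 1 with h1 | h1 <;>
      nlinarith [sin_sq_add_cos_sq θ, sq_nonneg (sin θ), sq_nonneg (cos θ)]
  have hnum : HasDerivAt (fun θ => (d - 1) * sin θ * cos θ)
      ((d - 1) * (cos θ * cos θ - sin θ * sin θ)) θ := by
    have := (((hasDerivAt_sin θ).const_mul (d - 1)).mul (hasDerivAt_cos θ))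
    refine this.congr_deriv ?_
    ring
  have hdeno : HasDerivAt (fun θ => cos θ ^ 2 + d * sin θ ^ 2)
      (2 * (d - 1) * sin θ * cos θ) θ := by
    have := (((hasDerivAt_cos θ).pow 2).add (((hasDerivAt_sin θ).pow 2).const_mul d))
    refine this.congr_deriv ?_
    ring
  have hu := hnum.div hdeno hden.ne'
  have hF' := ((hasDerivAt_id θ).add hu.arctan).div_const (p * d)
  refine hF'.congr_deriv ?_
  symm
  simp only [Pi.div_apply]
  have h1 : (1 + ((d - 1) * sin θ * cos θ / (cos θ ^ 2 + d * sin θ ^ 2)) ^ 2) ≠ 0 := by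
    positivity
  have h2 : p * cos θ ^ 2 + q * sin θ ^ 2 ≠ 0 := (stmt8_denom_pos' hp hq θ).ne'
  rw [eq_div_iff (by positivity : (p * d) ≠ (0:ℝ))]
  rw [← hd2] at h2 ⊢
  field_simp
  have h3 : cos θ ^ 2 + d ^ 2 * sin θ ^ 2 ≠ 0 := fun h => h2 (by linear_combination p * h)
  rw [div_eq_iff h3]
  linear_combination (-d * (cos θ ^ 2 + d ^ 2 * sin θ ^ 2) * (sin θ ^ 2 + cos θ ^ 2)) * hsc

lemma stmt8_key_integral {p q : ℝ} (hp : 0 < p) (hq : 0 < q) :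
    ∫ θ in (0:ℝ)..(2 * π), (p * cos θ ^ 2 + q * sin θ ^ 2)⁻¹
      = 2 * π / Real.sqrt (p * q) := by
  set d : ℝ := Real.sqrt q / Real.sqrt p with hd_def
  have hd : 0 < d := div_pos (Real.sqrt_pos.2 hq) (Real.sqrt_pos.2 hp)
  have hd2 : p * d ^ 2 = q := by
    rw [hd_def, div_pow, Real.sq_sqrt hq.le, Real.sq_sqrt hp.le]
    field_simp
  have hpd : Real.sqrt (p * q) = p * d := by
    have hpp : Real.sqrt p * Real.sqrt p = p := Real.mul_self_sqrt hp.le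
    rw [Real.sqrt_mul hp.le, hd_def]
    rw [mul_div_assoc', eq_div_iff (Real.sqrt_ne_zero'.2 hp)]
    linear_combination Real.sqrt q * hpp
  have hcont : Continuous fun θ : ℝ => (p * cos θ ^ 2 + q * sin θ ^ 2)⁻¹ := by
    apply Continuous.inv₀ (by continuity)
    intro θ; exact (stmt8_denom_pos' hp hq θ).ne'
  rw [intervalIntegral.integral_eq_sub_of_hasDerivAt
      (fun θ _ => stmt8_key_hasDerivAt hp hq hd hd2 θ) (hcont.intervalIntegrable _ _)]
  simp [Real.sin_two_pi, Real.cos_two_pi, hpd]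

lemma stmt8_deriv_v (h a : ℝ) (θ : ℝ) :
    HasDerivAt (fun θ : ℝ => ((WithLp.equiv 2 (Fin 3 → ℝ)).symm
      ![a * Real.cos θ, Real.sin θ, -h] : EuclideanSpace ℝ (Fin 3)))
      ((WithLp.equiv 2 (Fin 3 → ℝ)).symm ![-(a * Real.sin θ), Real.cos θ, 0]) θ := by
  have hw : HasDerivAt (fun θ : ℝ => (![a * Real.cos θ, Real.sin θ, -h] : Fin 3 → ℝ))
      ![-(a * Real.sin θ), Real.cos θ, 0] θ := by
    rw [hasDerivAt_pi]
    intro i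
    fin_cases i <;>
      simp only [Matrix.cons_val_zero, Matrix.cons_val_one, Matrix.head_cons,
        Matrix.cons_val_two, Matrix.tail_cons, Fin.isValue]
    · simpa [mul_comm] using ((hasDerivAt_cos θ).const_mul a)
    · exact hasDerivAt_sin θ
    · exact hasDerivAt_const θ (-h)
  have hL := ((PiLp.continuousLinearEquiv 2 ℝ
    (fun _ : Fin 3 => ℝ)).symm.toContinuousLinearMap.hasFDerivAt.comp_hasDerivAt θ hw)
  exact hL

lemma stmt8_norm_v (h a : ℝ) (θ : ℝ) :
    ‖((WithLp.equiv 2 (Fin 3 → ℝ)).symm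
      ![a * Real.cos θ, Real.sin θ, -h] : EuclideanSpace ℝ (Fin 3))‖
      = Real.sqrt ((a^2+h^2) * cos θ ^ 2 + (1+h^2) * sin θ ^ 2) := by
  rw [EuclideanSpace.norm_eq]
  congr 1
  simp [Fin.sum_univ_three, WithLp.equiv_symm_apply, PiLp.toLp_apply, Real.norm_eq_abs, sq_abs]
  linear_combination (-h^2) * (sin_sq_add_cos_sq θ)

lemma stmt8_norm_D (h a : ℝ) (hh : 0 < h) (ha : 1 ≤ a) (θ : ℝ) :
    ‖((Real.sqrt ((a^2+h^2) * cos θ ^ 2 + (1+h^2) * sin θ ^ 2))⁻¹ •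
        ((WithLp.equiv 2 (Fin 3 → ℝ)).symm ![-(a * Real.sin θ), Real.cos θ, 0]
          : EuclideanSpace ℝ (Fin 3)) +
      (-((((1+h^2) - (a^2+h^2)) * sin θ * cos θ) /
            (Real.sqrt ((a^2+h^2) * cos θ ^ 2 + (1+h^2) * sin θ ^ 2))) /
          (Real.sqrt ((a^2+h^2) * cos θ ^ 2 + (1+h^2) * sin θ ^ 2))^2) •
        ((WithLp.equiv 2 (Fin 3 → ℝ)).symm ![a * Real.cos θ, Real.sin θ, -h]
          : EuclideanSpace ℝ (Fin 3)))‖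
      = Real.sqrt ((a^2+h^2) + h^2*(a^2-1) * sin θ ^ 2)
          / ((a^2+h^2) * cos θ ^ 2 + (1+h^2) * sin θ ^ 2) := by
  have hsc : sin θ ^ 2 + cos θ ^ 2 = 1 := sin_sq_add_cos_sq θ
  have hQ : 0 < (a^2+h^2) * cos θ ^ 2 + (1+h^2) * sin θ ^ 2 := by
    nlinarith [sq_nonneg (sin θ), sq_nonneg (cos θ), sq_nonneg h,
      mul_nonneg (mul_nonneg (sq_nonneg h)
        (show (0:ℝ) ≤ a^2-1 by nlinarith)) (sq_nonneg (sin θ))]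
  have hN : 0 < (a^2+h^2) + h^2*(a^2-1) * sin θ ^ 2 := by
    nlinarith [mul_nonneg (mul_nonneg (sq_nonneg h)
      (show (0:ℝ) ≤ a^2-1 by nlinarith)) (sq_nonneg (sin θ))]
  have h3 : Real.sqrt (((a^2+h^2) + h^2*(a^2-1) * sin θ ^ 2)
        / ((a^2+h^2) * cos θ ^ 2 + (1+h^2) * sin θ ^ 2)^2)
      = Real.sqrt ((a^2+h^2) + h^2*(a^2-1) * sin θ ^ 2)
        / ((a^2+h^2) * cos θ ^ 2 + (1+h^2) * sin θ ^ 2) := by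
    rw [Real.sqrt_div hN.le, Real.sqrt_sq hQ.le]
  have hR : 0 < Real.sqrt ((a^2+h^2) * cos θ ^ 2 + (1+h^2) * sin θ ^ 2) := Real.sqrt_pos.2 hQ
  have hR2 : (Real.sqrt ((a^2+h^2) * cos θ ^ 2 + (1+h^2) * sin θ ^ 2))^2
      = (a^2+h^2) * cos θ ^ 2 + (1+h^2) * sin θ ^ 2 := Real.sq_sqrt hQ.le
  rw [EuclideanSpace.norm_eq]
  simp only [Fin.sum_univ_three, PiLp.add_apply, PiLp.smul_apply,
    WithLp.equiv_symm_apply, PiLp.toLp_apply, Matrix.cons_val_zero, Matrix.cons_val_one,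
    Matrix.head_cons, Matrix.cons_val_two, Matrix.tail_cons, smul_eq_mul,
    Real.norm_eq_abs, sq_abs]
  rw [← h3]
  generalize hRdef : Real.sqrt ((a^2+h^2) * cos θ ^ 2 + (1+h^2) * sin θ ^ 2) = R at hR hR2 ⊢
  congr 1
  generalize hQdef : (a^2+h^2) * cos θ ^ 2 + (1+h^2) * sin θ ^ 2 = Qv at hQ hR2 ⊢
  have r6 : R^6 = Qv^3 := by rw [← hR2]; ring
  trans (((a*sin θ*R^2 + ((1+h^2) - (a^2+h^2))*a*sin θ*cos θ^2)^2
      + (cos θ*R^2 - ((1+h^2) - (a^2+h^2))*sin θ^2*cos θ)^2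
      + (((1+h^2) - (a^2+h^2))*sin θ*cos θ*h)^2) / R^6)
  · field_simp
    ring
  · rw [r6, hR2]
    have hmain : ((a*sin θ*Qv + ((1+h^2) - (a^2+h^2))*a*sin θ*cos θ^2)^2
        + (cos θ*Qv - ((1+h^2) - (a^2+h^2))*sin θ^2*cos θ)^2
        + (((1+h^2) - (a^2+h^2))*sin θ*cos θ*h)^2)
        = ((a^2+h^2) + h^2*(a^2-1) * sin θ ^ 2) * Qv := by
      rw [← hQdef]
      have hsc2 := hsc
      have e2 : cos θ^2 = 1 - sin θ^2 := by linarith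
      have e4 : cos θ^4 = (1 - sin θ^2)^2 := by rw [← e2]; ring
      have e6 : cos θ^6 = (1 - sin θ^2)^3 := by rw [← e2]; ring
      ring_nf
      simp only [e6, e4, e2]
      ring
    rw [hmain]
    field_simp
end Aux

/-- The spherical cross-section curve of an elliptic cone of height `h > 0` over the ellipse
with semi-axes `a ≥ 1` and `1` has total arc length strictly less than `2π`, i.e. the cone
angle at the tip is less than `2π`. -/
theorem stmt8 (h a : ℝ) (hh : 0 < h) (ha : 1 ≤ a)
    (v : ℝ → EuclideanSpace ℝ (Fin 3))
    (hv : ∀ θ : ℝ, v θ = (WithLp.equiv 2 (Fin 3 → ℝ)).symm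
      ![a * Real.cos θ, Real.sin θ, -h])
    (c : ℝ → EuclideanSpace ℝ (Fin 3))
    (hc : ∀ θ : ℝ, c θ = ‖v θ‖⁻¹ • v θ) :
    (∫ θ in (0:ℝ)..(2 * Real.pi), ‖deriv c θ‖) < 2 * Real.pi := by
  have hp : (0:ℝ) < a^2 + h^2 := by nlinarith
  have hq : (0:ℝ) < 1 + h^2 := by nlinarith
  have hQpos : ∀ θ : ℝ, 0 < (a^2+h^2) * cos θ ^ 2 + (1+h^2) * sin θ ^ 2 :=
    fun θ => stmt8_denom_pos' hp hq θ
  -- S and t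
  set S : ℝ := Real.sqrt ((a^2+h^2) * (1+h^2)) with hS_def
  have hSpos : 0 < S := Real.sqrt_pos.2 (by positivity)
  have hS2 : S^2 = (a^2+h^2) * (1+h^2) := Real.sq_sqrt (by positivity)
  have hh2S : h^2 < S := by
    nlinarith [hSpos, hS2, sq_nonneg h, sq_nonneg (S - h^2)]
  set t : ℝ := Real.sqrt (S * (S - h^2)) with ht_def
  have htpos : 0 < t := Real.sqrt_pos.2 (by nlinarith)
  have ht2 : t^2 = S * (S - h^2) := Real.sq_sqrt (by nlinarith)
  -- rewrite c
  have hceq : c = fun θ : ℝ =>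
      (Real.sqrt ((a^2+h^2) * cos θ ^ 2 + (1+h^2) * sin θ ^ 2))⁻¹ •
        ((WithLp.equiv 2 (Fin 3 → ℝ)).symm ![a * Real.cos θ, Real.sin θ, -h]
          : EuclideanSpace ℝ (Fin 3)) := by
    funext θ
    rw [hc θ, hv θ, stmt8_norm_v h a θ]
  -- derivative of c
  have hcd : ∀ θ : ℝ, HasDerivAt c
      ((Real.sqrt ((a^2+h^2) * cos θ ^ 2 + (1+h^2) * sin θ ^ 2))⁻¹ •
        ((WithLp.equiv 2 (Fin 3 → ℝ)).symm ![-(a * Real.sin θ), Real.cos θ, 0]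
          : EuclideanSpace ℝ (Fin 3)) +
      (-((((1+h^2) - (a^2+h^2)) * sin θ * cos θ) /
            (Real.sqrt ((a^2+h^2) * cos θ ^ 2 + (1+h^2) * sin θ ^ 2))) /
          (Real.sqrt ((a^2+h^2) * cos θ ^ 2 + (1+h^2) * sin θ ^ 2))^2) •
        ((WithLp.equiv 2 (Fin 3 → ℝ)).symm ![a * Real.cos θ, Real.sin θ, -h]
          : EuclideanSpace ℝ (Fin 3))) θ := by
    intro θ
    have hQ' : HasDerivAt (fun θ : ℝ => (a^2+h^2) * cos θ ^ 2 + (1+h^2) * sin θ ^ 2)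
        (2 * ((((1+h^2) - (a^2+h^2)) * sin θ * cos θ))) θ := by
      have := (((hasDerivAt_cos θ).pow 2).const_mul (a^2+h^2)).add
        (((hasDerivAt_sin θ).pow 2).const_mul (1+h^2))
      refine this.congr_deriv ?_
      ring
    have hRd : HasDerivAt (fun θ : ℝ =>
        Real.sqrt ((a^2+h^2) * cos θ ^ 2 + (1+h^2) * sin θ ^ 2))
        ((((1+h^2) - (a^2+h^2)) * sin θ * cos θ) /
          (Real.sqrt ((a^2+h^2) * cos θ ^ 2 + (1+h^2) * sin θ ^ 2))) θ := by
      have := hQ'.sqrt (hQpos θ).ne'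
      convert this using 1
      have hRne : Real.sqrt ((a^2+h^2) * cos θ ^ 2 + (1+h^2) * sin θ ^ 2) ≠ 0 :=
        (Real.sqrt_pos.2 (hQpos θ)).ne'
      field_simp
    have hinv := hRd.inv (Real.sqrt_ne_zero'.2 (hQpos θ))
    have := hinv.smul (stmt8_deriv_v h a θ)
    rw [hceq]
    exact this
  have hnormD : ∀ θ : ℝ, ‖deriv c θ‖
      = Real.sqrt ((a^2+h^2) + h^2*(a^2-1) * sin θ ^ 2)
          / ((a^2+h^2) * cos θ ^ 2 + (1+h^2) * sin θ ^ 2) := by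
    intro θ
    rw [(hcd θ).deriv]
    exact stmt8_norm_D h a hh ha θ
  -- the majorant g
  set g : ℝ → ℝ := fun θ => (-(h^2)/(2*t)) +
    ((S^2+t^2)/(2*t)) * (((a^2+h^2) * cos θ ^ 2 + (1+h^2) * sin θ ^ 2))⁻¹ with hg_def
  have hcontQinv : Continuous fun θ : ℝ =>
      (((a^2+h^2) * cos θ ^ 2 + (1+h^2) * sin θ ^ 2))⁻¹ := by
    apply Continuous.inv₀ (by continuity)
    intro θ; exact (hQpos θ).ne'
  have hcontf : Continuous fun θ : ℝ =>
      Real.sqrt ((a^2+h^2) + h^2*(a^2-1) * sin θ ^ 2)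
        / ((a^2+h^2) * cos θ ^ 2 + (1+h^2) * sin θ ^ 2) := by
    apply Continuous.div
    · exact (Real.continuous_sqrt.comp (by continuity))
    · continuity
    · intro θ; exact (hQpos θ).ne'
  have hcontg : Continuous g := by
    apply Continuous.add continuous_const
    exact continuous_const.mul hcontQinv
  -- pointwise bound
  have hfg : ∀ θ : ℝ,
      Real.sqrt ((a^2+h^2) + h^2*(a^2-1) * sin θ ^ 2)
        / ((a^2+h^2) * cos θ ^ 2 + (1+h^2) * sin θ ^ 2) ≤ g θ := by
    intro θ
    have hsc : sin θ ^ 2 + cos θ ^ 2 = 1 := sin_sq_add_cos_sq θ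
    have hQ := hQpos θ
    have hN : 0 < (a^2+h^2) + h^2*(a^2-1) * sin θ ^ 2 := by
      nlinarith [mul_nonneg (mul_nonneg (sq_nonneg h)
        (show (0:ℝ) ≤ a^2-1 by nlinarith)) (sq_nonneg (sin θ))]
    have hgval : g θ = ((a^2+h^2) + h^2*(a^2-1) * sin θ ^ 2 + t^2)
        / (2*t*((a^2+h^2) * cos θ ^ 2 + (1+h^2) * sin θ ^ 2)) := by
      rw [hg_def, hS2]
      have e2 : cos θ^2 = 1 - sin θ^2 := by linarith
      have e4 : cos θ^4 = (1 - sin θ^2)^2 := by rw [← e2]; ring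
      field_simp
      ring_nf
      simp only [e4, e2]
      ring
    rw [hgval, div_le_div_iff₀ hQ (by positivity)]
    have key : Real.sqrt ((a^2+h^2) + h^2*(a^2-1) * sin θ ^ 2) * (2*t)
        ≤ (a^2+h^2) + h^2*(a^2-1) * sin θ ^ 2 + t^2 := by
      nlinarith [sq_nonneg (Real.sqrt ((a^2+h^2) + h^2*(a^2-1) * sin θ ^ 2) - t),
        Real.sq_sqrt hN.le, Real.sqrt_nonneg ((a^2+h^2) + h^2*(a^2-1) * sin θ ^ 2)]
    nlinarith [mul_le_mul_of_nonneg_right key hQ.le]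
  -- compare integrals
  have hmono : (∫ θ in (0:ℝ)..(2 * Real.pi), ‖deriv c θ‖)
      ≤ ∫ θ in (0:ℝ)..(2 * Real.pi), g θ := by
    rw [intervalIntegral.integral_congr
      (g := fun θ => Real.sqrt ((a^2+h^2) + h^2*(a^2-1) * sin θ ^ 2)
        / ((a^2+h^2) * cos θ ^ 2 + (1+h^2) * sin θ ^ 2)) (fun θ _ => hnormD θ)]
    apply intervalIntegral.integral_mono_on (by positivity)
      (hcontf.intervalIntegrable _ _) (hcontg.intervalIntegrable _ _)
    exact fun θ _ => hfg θ
  -- compute ∫ g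
  have hintg : (∫ θ in (0:ℝ)..(2 * Real.pi), g θ)
      = (2*π) * (-(h^2)/(2*t)) + ((S^2+t^2)/(2*t)) * (2*π/S) := by
    rw [hg_def]
    beta_reduce
    rw [intervalIntegral.integral_add (intervalIntegrable_const)
      (g := fun θ : ℝ => ((S^2+t^2)/(2*t)) *
        (((a^2+h^2) * cos θ ^ 2 + (1+h^2) * sin θ ^ 2))⁻¹)
      ((continuous_const.mul hcontQinv).intervalIntegrable _ _)]
    rw [intervalIntegral.integral_const, intervalIntegral.integral_const_mul]
    rw [stmt8_key_integral hp hq]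
    rw [← hS_def]
    simp [smul_eq_mul]
  have hfinal : (2*π) * (-(h^2)/(2*t)) + ((S^2+t^2)/(2*t)) * (2*π/S) < 2*π := by
    have hlt : S - h^2 < t := by
      nlinarith [ht2, hh2S, htpos, hh.le, sq_nonneg h,
        mul_pos (show (0:ℝ) < S - h^2 by linarith) (show (0:ℝ) < h^2 by positivity)]
    have heq : (2*π) * (-(h^2)/(2*t)) + ((S^2+t^2)/(2*t)) * (2*π/S)
        = 2*π*(S - h^2)/t := by
      rw [ht2]
      field_simp
      ring
    rw [heq, div_lt_iff₀ htpos]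
    have hpi := Real.pi_pos
    nlinarith [hlt, htpos, hpi]
  calc (∫ θ in (0:ℝ)..(2 * Real.pi), ‖deriv c θ‖)
      ≤ ∫ θ in (0:ℝ)..(2 * Real.pi), g θ := hmono
    _ = (2*π) * (-(h^2)/(2*t)) + ((S^2+t^2)/(2*t)) * (2*π/S) := hintg
    _ < 2*π := hfinal
end

section
/- For every h > 0, setting S := √(1+h²) and α := 2π/S, there exists β ∈ (0, π/2) such that ((S·cos β/sin β)²/2)·(2β − sin(2β)) + (S²/2)·(π − 2β − sin(2β)) = α·S²/4. That is, with r₁ = S·cot β, the two circular segments of areas A₁(β) = (r₁²/2)(2β − sin 2β) and A₂(β) = (S²/2)(π − 2β − sin 2β) together make up exactly half the area α·S²/2 of the sector of radius S and angle α. -/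
open Real

/-- Existence of the winding (type T2) area-halving interface on the flattened cone:
there is `β ∈ (0, π/2)` such that the two circular segments of areas
`A₁(β) = (r₁²/2)(2β - sin 2β)` (with `r₁ = S·cot β`) and
`A₂(β) = (S²/2)(π - 2β - sin 2β)` together make up half the sector area `α·S²/2`. -/
theorem stmt14 (h : ℝ) (hh : 0 < h) (S α : ℝ)
    (hS : S = Real.sqrt (1 + h ^ 2)) (hα : α = 2 * Real.pi / S) :
    ∃ β ∈ Set.Ioo 0 (Real.pi / 2),
      (S * Real.cos β / Real.sin β) ^ 2 / 2 * (2 * β - Real.sin (2 * β)) +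
        S ^ 2 / 2 * (Real.pi - 2 * β - Real.sin (2 * β)) = α * S ^ 2 / 4 := by
  have hS1 : 1 < S := by
    rw [hS]
    nlinarith [Real.sq_sqrt (show (0:ℝ) ≤ 1 + h ^ 2 by positivity),
      Real.sqrt_nonneg (1 + h ^ 2)]
  have hS0 : 0 < S := lt_trans one_pos hS1
  have hpi := Real.pi_pos
  -- target value
  have htarget : α * S ^ 2 / 4 = Real.pi * S / 2 := by
    rw [hα]; field_simp; ring
  set f : ℝ → ℝ := fun β =>
    (S * Real.cos β / Real.sin β) ^ 2 / 2 * (2 * β - Real.sin (2 * β)) +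
      S ^ 2 / 2 * (Real.pi - 2 * β - Real.sin (2 * β)) with hf
  -- choice of left endpoint
  set β₀ : ℝ := min (Real.pi * (1 - 1 / S) / 8) (Real.pi / 4) with hβ₀
  have hb0pos : 0 < β₀ := by
    apply lt_min
    · have : 0 < 1 - 1 / S := by
        have : 1 / S < 1 := by
          rw [div_lt_one hS0]; exact hS1
        linarith
      positivity
    · positivity
  have hb0le : β₀ ≤ Real.pi / 4 := min_le_right _ _
  have hb0lt : β₀ < Real.pi / 2 := lt_of_le_of_lt hb0le (by linarith)
  -- continuity on [β₀, π/2]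
  have hcsin2 : Continuous fun β : ℝ => Real.sin (2 * β) :=
    Real.continuous_sin.comp (continuous_const.mul continuous_id)
  have hc1 : Continuous fun β : ℝ => 2 * β - Real.sin (2 * β) :=
    (continuous_const.mul continuous_id).sub hcsin2
  have hc2 : Continuous fun β : ℝ => Real.pi - 2 * β - Real.sin (2 * β) :=
    (continuous_const.sub (continuous_const.mul continuous_id)).sub hcsin2
  have hcont : ContinuousOn f (Set.Icc β₀ (Real.pi / 2)) := by
    apply ContinuousOn.add
    · apply ContinuousOn.mul
      · apply ContinuousOn.div_const
        apply ContinuousOn.pow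
        apply ContinuousOn.div
        · exact (continuous_const.mul Real.continuous_cos).continuousOn
        · exact Real.continuous_sin.continuousOn
        · intro x hx
          have hx1 := hx.1
          have hx2 := hx.2
          have : 0 < Real.sin x :=
            Real.sin_pos_of_pos_of_lt_pi (lt_of_lt_of_le hb0pos hx1)
              (lt_of_le_of_lt hx2 (by linarith))
          exact ne_of_gt this
      · exact hc1.continuousOn
    · exact (continuous_const.mul hc2).continuousOn
  -- f (π/2) = 0
  have hftop : f (Real.pi / 2) = 0 := by
    simp only [hf]
    rw [show 2 * (Real.pi / 2) = Real.pi by ring]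
    simp [Real.cos_pi_div_two, Real.sin_pi]
  -- f β₀ > π S / 2
  have hsin2b : Real.sin (2 * β₀) ≤ 2 * β₀ := Real.sin_le (by linarith)
  have hfirst : 0 ≤ (S * Real.cos β₀ / Real.sin β₀) ^ 2 / 2 * (2 * β₀ - Real.sin (2 * β₀)) := by
    apply mul_nonneg (by positivity) (by linarith)
  have hb0small : 4 * β₀ < Real.pi * (1 - 1 / S) := by
    have := min_le_left (Real.pi * (1 - 1 / S) / 8) (Real.pi / 4)
    have h18 : 0 < Real.pi * (1 - 1 / S) := by
      have : 1 / S < 1 := by rw [div_lt_one hS0]; exact hS1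
      have : 0 < 1 - 1 / S := by linarith
      positivity
    calc 4 * β₀ ≤ 4 * (Real.pi * (1 - 1 / S) / 8) := by linarith [min_le_left (Real.pi * (1 - 1 / S) / 8) (Real.pi / 4)]
      _ < Real.pi * (1 - 1 / S) := by linarith
  have hkey : Real.pi / S < Real.pi - 4 * β₀ := by
    have : Real.pi * (1 / S) = Real.pi / S := by ring
    nlinarith [hb0small]
  have hfb0 : Real.pi * S / 2 < f β₀ := by
    have hsecond : S ^ 2 / 2 * (Real.pi - 4 * β₀) ≤
        S ^ 2 / 2 * (Real.pi - 2 * β₀ - Real.sin (2 * β₀)) := by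
      apply mul_le_mul_of_nonneg_left _ (by positivity)
      linarith
    have hSsq : Real.pi * S / 2 < S ^ 2 / 2 * (Real.pi - 4 * β₀) := by
      have h1 : Real.pi < S * (Real.pi - 4 * β₀) := by
        have := (div_lt_iff₀ hS0).mp hkey
        linarith [this]
      nlinarith [h1, hS0]
    simp only [hf]
    linarith
  -- IVT
  have hmem : Real.pi * S / 2 ∈ Set.Icc (f (Real.pi / 2)) (f β₀) := by
    rw [hftop]
    constructor
    · positivity
    · linarith
  have := intermediate_value_Icc' (le_of_lt hb0lt) hcont hmem
  obtain ⟨β, hβmem, hβeq⟩ := this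
  refine ⟨β, ⟨lt_of_lt_of_le hb0pos hβmem.1, ?_⟩, ?_⟩
  · rcases lt_or_eq_of_le hβmem.2 with h' | h'
    · exact h'
    · exfalso
      rw [h'] at hβeq
      rw [hftop] at hβeq
      have : 0 < Real.pi * S / 2 := by positivity
      linarith
  · rw [htarget]
    exact hβeq
end

section
/- Let c > 0 and define u : (0,∞) × ℝ → ℝ by u(r,θ) = r^{1/c}·sin θ (with r^{1/c} the real power). Then: (i) for every r > 0 and θ ∈ ℝ, u satisfies the conic Laplace equation ∂²u/∂r² + (1/r)·∂u/∂r + (1/(c²·r²))·∂²u/∂θ² = 0; and (ii) if c > 1, the second radial derivative ∂²u/∂r²(r,θ) = (1/c)·(1/c − 1)·r^{1/c − 2}·sin θ fails to be square integrable with respect to the cone volume measure r dr dθ near r = 0; concretely, the function r ↦ r^{2/c − 3} is not integrable on the interval (0,1). -/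
open Real MeasureTheory

lemma aux17_d1 (c θ : ℝ) {s : ℝ} (hs : 0 < s) :
    deriv (fun s' : ℝ => s' ^ (1 / c) * Real.sin θ) s
      = 1 / c * s ^ (1 / c - 1) * Real.sin θ := by
  have h := ((Real.hasDerivAt_rpow_const (p := 1 / c) (Or.inl hs.ne')).mul_const
    (Real.sin θ)).deriv
  rw [h]

lemma aux17_d2 (c : ℝ) {r : ℝ} (hr : 0 < r) (θ : ℝ) :
    deriv (fun s : ℝ => deriv (fun s' : ℝ => s' ^ (1 / c) * Real.sin θ) s) r
      = 1 / c * (1 / c - 1) * r ^ (1 / c - 2) * Real.sin θ := by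
  have hEq : (fun s : ℝ => deriv (fun s' : ℝ => s' ^ (1 / c) * Real.sin θ) s)
      =ᶠ[nhds r] fun s => 1 / c * s ^ (1 / c - 1) * Real.sin θ := by
    filter_upwards [IsOpen.mem_nhds isOpen_Ioi hr] with s hs
    exact aux17_d1 c θ hs
  rw [hEq.deriv_eq]
  have h := (((Real.hasDerivAt_rpow_const (p := 1 / c - 1) (Or.inl hr.ne')).const_mul
    (1 / c)).mul_const (Real.sin θ)).deriv
  rw [h]
  have : 1 / c - 1 - 1 = 1 / c - 2 := by ring
  rw [this]; ring

/-- On the cone with metric `dr² + c²r²dθ²`, the function `u(r,θ) = r^{1/c} sin θ`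
is harmonic for the conic Laplacian `∂²_r + r⁻¹∂_r + c⁻²r⁻²∂²_θ`; moreover, for cone
angle `2πc > 2π` (i.e. `c > 1`) its second radial derivative equals
`(1/c)(1/c - 1) r^{1/c-2} sin θ`, and `r ↦ r^{2/c-3}` fails to be integrable on `(0,1)`,
so `u ∉ H²` near the tip. -/
theorem stmt17 (c : ℝ) (hc : 0 < c)
    (u : ℝ → ℝ → ℝ) (hu : ∀ r θ : ℝ, u r θ = r ^ (1 / c) * Real.sin θ) :
    (∀ r : ℝ, 0 < r → ∀ θ : ℝ,
      deriv (fun s : ℝ => deriv (fun s' : ℝ => u s' θ) s) r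
        + 1 / r * deriv (fun s : ℝ => u s θ) r
        + 1 / (c ^ 2 * r ^ 2) * deriv (fun t : ℝ => deriv (fun t' : ℝ => u r t') t) θ
        = 0) ∧
    (1 < c →
      (∀ r : ℝ, 0 < r → ∀ θ : ℝ,
        deriv (fun s : ℝ => deriv (fun s' : ℝ => u s' θ) s) r
          = 1 / c * (1 / c - 1) * r ^ (1 / c - 2) * Real.sin θ) ∧
      ¬ IntegrableOn (fun r : ℝ => r ^ (2 / c - 3)) (Set.Ioo (0 : ℝ) 1)) := by
  have hu' : u = fun r θ => r ^ (1 / c) * Real.sin θ := by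
    funext r θ; exact hu r θ
  subst hu'
  constructor
  · intro r hr θ
    rw [aux17_d2 c hr θ, aux17_d1 c θ hr]
    have hθ2 : deriv (fun t : ℝ =>
        deriv (fun t' : ℝ => r ^ (1 / c) * Real.sin t') t) θ
        = r ^ (1 / c) * (-Real.sin θ) := by
      have hfun : (fun t : ℝ => deriv (fun t' : ℝ => r ^ (1 / c) * Real.sin t') t)
          = fun t => r ^ (1 / c) * Real.cos t := by
        funext t
        exact ((Real.hasDerivAt_sin t).const_mul (r ^ (1 / c))).deriv
      rw [hfun]
      have := ((Real.hasDerivAt_cos θ).const_mul (r ^ (1 / c))).deriv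
      rw [this]
    rw [hθ2]
    have h1 : r ^ (1 / c - 2) = r ^ (1 / c) / r ^ 2 := by
      rw [Real.rpow_sub hr, Real.rpow_two]
    have h2 : r ^ (1 / c - 1) = r ^ (1 / c) / r := by
      rw [Real.rpow_sub hr, Real.rpow_one]
    rw [h1, h2]
    field_simp
    ring
  · intro hc1
    refine ⟨fun r hr θ => aux17_d2 c hr θ, ?_⟩
    rw [intervalIntegral.integrableOn_Ioo_rpow_iff zero_lt_one]
    push_neg
    have : 2 / c < 2 := by
      rw [div_lt_iff₀ hc]; nlinarith
    linarith
end
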